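/- For every regular expression α, the position automaton A_pos(α) accepts exactly L(α). -/

import Mathlib

open RegularExpression
open scoped Classical

variable {σ : Type*}

/-- Alphabetic size: number of letter occurrences. -/
def alph : RegularExpression σ → ℕ
  | zero => 0
  | epsilon => 0
  | char _ => 1
  | plus P Q => alph P + alph Q
  | comp P Q => alph P + alph Q
  | RegularExpression.star P => alph P

/-- Mark every letter occurrence with its position; `n` is the number of
positions used so far (positions are `n+1, n+2, …`). -/
def mark : RegularExpression σ → ℕ → RegularExpression (σ × ℕ)
  | zero, _ => zero
  | epsilon, _ => epsilon
  | char a, n => char (a, n + 1)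
  | plus P Q, n => plus (mark P n) (mark Q (n + alph P))
  | comp P Q, n => comp (mark P n) (mark Q (n + alph P))
  | RegularExpression.star P, n => RegularExpression.star (mark P n)

/-- The marked version `ᾱ` of `α`, with positions `1, …, |α|_Σ`. -/
def marked (α : RegularExpression σ) : RegularExpression (σ × ℕ) :=
  mark α 0

/-- `first(α)`: positions that can begin a word of `L(ᾱ)`. -/
def first (α : RegularExpression σ) : Set ℕ :=
  {j | ∃ a w, ((a, j) :: w) ∈ (marked α).matches'}

/-- `last(α)`: positions that can end a word of `L(ᾱ)`. -/
def last (α : RegularExpression σ) : Set ℕ :=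
  {j | ∃ a w, (w ++ [(a, j)]) ∈ (marked α).matches'}

/-- `follow(α,i)`: positions that can follow position `i` in a word of `L(ᾱ)`,
with `follow(α,0) = first(α)`. -/
def follow (α : RegularExpression σ) (i : ℕ) : Set ℕ :=
  if i = 0 then first α
  else {j | ∃ a b u v, (u ++ (a, i) :: (b, j) :: v) ∈ (marked α).matches'}

/-- The letter occurring at position `j` (1-indexed) of `α`, if any. -/
def letterAt : RegularExpression σ → ℕ → Option σ
  | zero, _ => none
  | epsilon, _ => none
  | char a, j => if j = 1 then some a else none
  | plus P Q, j => if j ≤ alph P then letterAt P j else letterAt Q (j - alph P)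
  | comp P Q, j => if j ≤ alph P then letterAt P j else letterAt Q (j - alph P)
  | RegularExpression.star P, j => letterAt P j

/- ### helpers -/

/-- shift a marked letter -/
def shf (n : ℕ) : σ × ℕ → σ × ℕ := fun p => (p.1, p.2 + n)

def dwn (n : ℕ) : σ × ℕ → σ × ℕ := fun p => (p.1, p.2 - n)

lemma mark_add (α : RegularExpression σ) (n : ℕ) :
    ∀ m, mark α (m + n) = (mark α m).map (shf n) := by
  induction α with
  | zero => intro m; rfl
  | epsilon => intro m; rfl
  | char a => intro m; simp [mark, RegularExpression.map, shf]; rw [Nat.add_right_comm]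
  | plus P Q ihP ihQ =>
      intro m
      simp only [mark, RegularExpression.map, ← plus_def]
      rw [show m + n + alph P = (m + alph P) + n by omega, ihP, ihQ]
  | comp P Q ihP ihQ =>
      intro m
      simp only [mark, RegularExpression.map, ← comp_def]
      rw [show m + n + alph P = (m + alph P) + n by omega, ihP, ihQ]
  | star P ihP =>
      intro m
      simp only [mark, RegularExpression.map]
      rw [ihP]

lemma mark_eq_map (α : RegularExpression σ) (n : ℕ) :
    mark α n = (marked α).map (shf n) := by
  have := mark_add α n 0
  simpa [marked] using this

lemma mem_mark_iff {α : RegularExpression σ} {n : ℕ} {w : List (σ × ℕ)} :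
    w ∈ (mark α n).matches' ↔ ∃ v ∈ (marked α).matches', v.map (shf n) = w := by
  rw [mark_eq_map, matches'_map]
  exact Set.mem_image _ _ _

lemma mark_map_fst (α : RegularExpression σ) : ∀ n, (mark α n).map Prod.fst = α := by
  induction α with
  | zero => intro n; rfl
  | epsilon => intro n; rfl
  | char a => intro n; rfl
  | plus P Q ihP ihQ => intro n; simp [mark, RegularExpression.map, ihP, ihQ]
  | comp P Q ihP ihQ => intro n; simp [mark, RegularExpression.map, ihP, ihQ]
  | star P ihP => intro n; simp [mark, RegularExpression.map, ihP]

lemma mem_matches_iff_unmark {α : RegularExpression σ} {n : ℕ} {w : List σ} :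
    w ∈ α.matches' ↔ ∃ v ∈ (mark α n).matches', v.map Prod.fst = w := by
  conv_lhs => rw [← mark_map_fst α n]
  rw [matches'_map]
  exact Set.mem_image _ _ _

lemma nil_mem_mark {α : RegularExpression σ} {n : ℕ} :
    [] ∈ (mark α n).matches' ↔ [] ∈ α.matches' := by
  rw [mem_matches_iff_unmark (α := α) (n := n) (w := ([] : List σ))]
  constructor
  · intro h; exact ⟨[], h, rfl⟩
  · rintro ⟨v, hv, hmap⟩
    rw [List.map_eq_nil_iff] at hmap
    subst hmap; exact hv

section ListHelpers
variable {γ : Type*}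

lemma chain'_induct {R : γ → γ → Prop} {Pp : γ → Prop} :
    ∀ {l : List γ}, List.Chain' R l → (∀ x ∈ l.head?, Pp x) →
      (∀ a ∈ l, ∀ b, Pp a → R a b → Pp b) → ∀ y ∈ l, Pp y := by
  intro l
  induction l with
  | nil => intro _ _ _ y hy; simp at hy
  | cons x l ih =>
      intro hch hhd hstep y hy
      have hx : Pp x := hhd x (by simp)
      rcases List.mem_cons.mp hy with rfl | hy'
      · exact hx
      · rw [List.Chain', List.isChain_cons] at hch
        exact ih hch.2 (fun z hz => hstep x (by simp) z hx (hch.1 z hz))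
          (fun a ha b => hstep a (by simp [ha]) b) y hy'

lemma chain'_mono_mem {R S : γ → γ → Prop} :
    ∀ {l : List γ}, (∀ a ∈ l, ∀ b ∈ l, R a b → S a b) → List.Chain' R l → List.Chain' S l := by
  intro l
  induction l with
  | nil => intro _ _; exact List.isChain_nil
  | cons x l ih =>
      intro h hch
      rw [List.Chain', List.isChain_cons] at hch ⊢
      refine ⟨fun y hy => h x (by simp) y (by simp [List.mem_of_mem_head? hy]) (hch.1 y hy),
        ih (fun a ha b hb => h a (by simp [ha]) b (by simp [hb])) hch.2⟩

lemma chain'_of_splits {R : γ → γ → Prop} :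
    ∀ {l : List γ}, (∀ u x y t, l = u ++ x :: y :: t → R x y) → List.Chain' R l := by
  intro l
  induction l with
  | nil => intro _; exact List.isChain_nil
  | cons a l ih =>
      intro h
      rw [List.Chain', List.isChain_cons]
      constructor
      · intro y hy
        rcases l with _ | ⟨b, t⟩
        · simp at hy
        · simp at hy; subst hy; exact h [] a b t rfl
      · exact ih (fun u x y t ht => h (a :: u) x y t (by simp [ht]))

lemma chain'_split_rel {R : γ → γ → Prop} {l u t : List γ} {x y : γ}
    (hch : List.Chain' R l) (h : l = u ++ x :: y :: t) : R x y := by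
  subst h
  have h2 := (List.isChain_append.mp hch).2.1
  exact (List.isChain_cons_cons.mp h2).1

lemma not_chain'_split {R S : γ → γ → Prop} :
    ∀ {l : List γ}, List.Chain' R l → ¬ List.Chain' S l →
      ∃ u x y t, l = u ++ x :: y :: t ∧ List.Chain' S (u ++ [x]) ∧ R x y ∧ ¬ S x y := by
  intro l
  induction l with
  | nil => intro _ h; exact absurd List.isChain_nil h
  | cons a l ih =>
      rcases l with _ | ⟨b, t⟩
      · intro _ h; exact absurd (List.isChain_singleton a) h
      · intro hR hS
        by_cases hab : S a b
        · have hR' : List.Chain' R (b :: t) := (List.isChain_cons_cons.mp hR).2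
          have hS' : ¬ List.Chain' S (b :: t) := by
            intro hc; exact hS (List.isChain_cons_cons.mpr ⟨hab, hc⟩)
          obtain ⟨u, x, y, t', heq, hchS, hRxy, hnS⟩ := ih hR' hS'
          refine ⟨a :: u, x, y, t', by simp [heq], ?_, hRxy, hnS⟩
          rw [List.cons_append, List.Chain', List.isChain_cons]
          refine ⟨?_, hchS⟩
          intro z hz
          have : (u ++ [x]).head? = some b := by
            rcases u with _ | ⟨c, u'⟩
            · simp at heq ⊢; exact heq.1.symm
            · simp at heq ⊢; exact heq.1.symm
          rw [this] at hz; simp at hz; subst hz; exact hab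
        · exact ⟨[], a, b, t, rfl, List.isChain_singleton a, (List.isChain_cons_cons.mp hR).1, hab⟩

lemma head_flatten {L : List (List γ)} {y : γ} {v : List γ} :
    L.flatten = y :: v → ∃ s, y :: s ∈ L := by
  induction L generalizing v with
  | nil => intro h; simp at h
  | cons w L' ih =>
      intro h
      rcases w with _ | ⟨z, s⟩
      · simp at h; obtain ⟨s, hs⟩ := ih h; exact ⟨s, by simp [hs]⟩
      · simp at h
        exact ⟨s, by simp [h.1]⟩

lemma last_flatten {L : List (List γ)} {y : γ} :
    ∀ {v : List γ}, L.flatten = v ++ [y] → ∃ s, s ++ [y] ∈ L := by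
  induction L with
  | nil => intro v h; simp at h
  | cons w L' ih =>
      intro v h
      simp only [List.flatten_cons] at h
      rcases List.append_eq_append_iff.mp h with ⟨a', _, ha2⟩ | ⟨c', hc1, hc2⟩
      · obtain ⟨s, hs⟩ := ih ha2; exact ⟨s, by simp [hs]⟩
      · rcases c' with _ | ⟨z, c''⟩
        · simp at hc2
          obtain ⟨s, hs⟩ := ih (v := []) (by simp [hc2]); exact ⟨s, by simp [hs]⟩
        · simp at hc2
          obtain ⟨rfl, hc3, hc4⟩ := hc2
          refine ⟨v, ?_⟩
          rw [hc1, hc3.symm]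
          simp



lemma append_adj {A B u v : List γ} {x y : γ} (h : A ++ B = u ++ x :: y :: v) :
    (∃ u' v', A = u' ++ x :: y :: v') ∨ (∃ u' v', B = u' ++ x :: y :: v') ∨
      ((∃ u', A = u' ++ [x]) ∧ ∃ v', B = y :: v') := by
  rcases List.append_eq_append_iff.mp h with ⟨a', _, ha2⟩ | ⟨c', hc1, hc2⟩
  · exact Or.inr (Or.inl ⟨a', v, ha2⟩)
  · rcases c' with _ | ⟨z, c''⟩
    · simp at hc2
      exact Or.inr (Or.inl ⟨[], v, by simp [hc2]⟩)
    · simp at hc2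
      obtain ⟨rfl, hc3⟩ := hc2
      rcases c'' with _ | ⟨z', c'''⟩
      · simp at hc3
        exact Or.inr (Or.inr ⟨⟨u, by simpa using hc1⟩, v, hc3.symm⟩)
      · simp at hc3
        obtain ⟨rfl, _⟩ := hc3
        exact Or.inl ⟨u, c''', by simpa using hc1⟩

lemma flatten_adj {L : List (List γ)} {u v : List γ} {x y : γ}
    (h : L.flatten = u ++ x :: y :: v) :
    (∃ w ∈ L, ∃ u' v', w = u' ++ x :: y :: v') ∨
      (∃ w₁ ∈ L, ∃ w₂ ∈ L, (∃ u', w₁ = u' ++ [x]) ∧ ∃ v', w₂ = y :: v') := by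
  induction L generalizing u v with
  | nil => simp at h
  | cons w L' ih =>
      simp only [List.flatten_cons] at h
      rcases append_adj h with ⟨u', v', hw⟩ | ⟨u', v', hB⟩ | ⟨⟨u', hu'⟩, v', hv'⟩
      · exact Or.inl ⟨w, by simp, u', v', hw⟩
      · rcases ih hB with ⟨w', hw', hrest⟩ | ⟨w₁, h₁, w₂, h₂, hrest⟩
        · exact Or.inl ⟨w', by simp [hw'], hrest⟩
        · exact Or.inr ⟨w₁, by simp [h₁], w₂, by simp [h₂], hrest⟩
      · obtain ⟨s, hs⟩ := head_flatten hv'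
        exact Or.inr ⟨w, by simp, y :: s, by simp [hs], ⟨u', hu'⟩, s, rfl⟩

end ListHelpers

/- ### canonical forms -/

lemma matches_marked_plus {P Q : RegularExpression σ} {v : List (σ × ℕ)} :
    v ∈ (marked (plus P Q)).matches' ↔
      v ∈ (marked P).matches' ∨ v ∈ (mark Q (alph P)).matches' := by
  have : marked (plus P Q) = marked P + mark Q (alph P) := by
    simp [marked, mark, Nat.zero_add, plus_def]
  rw [this, matches'_add, Language.mem_add]

lemma matches_marked_comp {P Q : RegularExpression σ} {v : List (σ × ℕ)} :
    v ∈ (marked (comp P Q)).matches' ↔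
      ∃ x ∈ (marked P).matches', ∃ y ∈ (mark Q (alph P)).matches', x ++ y = v := by
  have : marked (comp P Q) = marked P * mark Q (alph P) := by
    simp [marked, mark, Nat.zero_add, comp_def]
  rw [this, matches'_mul, Language.mem_mul]

lemma matches_marked_star {P : RegularExpression σ} {v : List (σ × ℕ)} :
    v ∈ (marked (P.star)).matches' ↔
      ∃ L : List (List (σ × ℕ)), v = L.flatten ∧ ∀ y ∈ L, y ∈ (marked P).matches' := by
  have : marked (P.star) = RegularExpression.star (marked P) := rfl
  rw [this, matches'_star, Language.mem_kstar]


/- ### bounds -/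

lemma letterAt_le {α : RegularExpression σ} :
    ∀ {j : ℕ} {a : σ}, letterAt α j = some a → 1 ≤ j ∧ j ≤ alph α := by
  induction α with
  | zero => intro j a h; simp [letterAt] at h
  | epsilon => intro j a h; simp [letterAt] at h
  | char b => intro j a h; simp only [letterAt] at h; split at h <;> simp_all [alph]
  | plus P Q ihP ihQ =>
      intro j a h
      simp only [letterAt] at h
      split at h
      · have := ihP h; simp [alph]; omega
      · have := ihQ h; simp [alph] at *; omega
  | comp P Q ihP ihQ =>
      intro j a h
      simp only [letterAt] at h
      split at h
      · have := ihP h; simp [alph]; omega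
      · have := ihQ h; simp [alph] at *; omega
  | star P ihP =>
      intro j a h
      exact ihP h

lemma mem_marked_bounds {α : RegularExpression σ} :
    ∀ {v : List (σ × ℕ)}, v ∈ (marked α).matches' →
      ∀ p ∈ v, 1 ≤ p.2 ∧ p.2 ≤ alph α ∧ letterAt α p.2 = some p.1 := by
  induction α with
  | zero => intro v hv; simp [marked, mark, matches'] at hv
  | epsilon =>
      intro v hv
      simp [marked, mark, matches', Language.mem_one] at hv
      subst hv; intro p hp; simp at hp
  | char a =>
      intro v hv
      simp [marked, mark, matches'] at hv
      subst hv
      intro p hp; simp at hp; subst hp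
      simp [alph, letterAt]
  | plus P Q ihP ihQ =>
      intro v hv p hp
      rcases matches_marked_plus.mp hv with hv | hv
      · have := ihP hv p hp
        simp only [alph, letterAt]
        refine ⟨this.1, by omega, ?_⟩
        rw [if_pos this.2.1]
        exact this.2.2
      · rw [mem_mark_iff] at hv
        obtain ⟨w, hw, rfl⟩ := hv
        rw [List.mem_map] at hp
        obtain ⟨q, hq, rfl⟩ := hp
        have := ihQ hw q hq
        simp only [alph, letterAt, shf]
        have h1 := this.1; have h2 := this.2.1
        refine ⟨by omega, by omega, ?_⟩
        refine (if_neg (show ¬ (q.2 + alph P ≤ alph P) by omega)).trans ?_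
        simpa [show q.2 + alph P - alph P = q.2 by omega] using this.2.2
  | comp P Q ihP ihQ =>
      intro v hv p hp
      obtain ⟨x, hx, y, hy, rfl⟩ := matches_marked_comp.mp hv
      rcases List.mem_append.mp hp with hp | hp
      · have := ihP hx p hp
        simp only [alph, letterAt]
        refine ⟨this.1, by omega, ?_⟩
        rw [if_pos this.2.1]
        exact this.2.2
      · rw [mem_mark_iff] at hy
        obtain ⟨w, hw, rfl⟩ := hy
        rw [List.mem_map] at hp
        obtain ⟨q, hq, rfl⟩ := hp
        have := ihQ hw q hq
        simp only [alph, letterAt, shf]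
        have h1 := this.1; have h2 := this.2.1
        refine ⟨by omega, by omega, ?_⟩
        refine (if_neg (show ¬ (q.2 + alph P ≤ alph P) by omega)).trans ?_
        simpa [show q.2 + alph P - alph P = q.2 by omega] using this.2.2
  | star P ihP =>
      intro v hv p hp
      obtain ⟨L, rfl, hL⟩ := matches_marked_star.mp hv
      rw [List.mem_flatten] at hp
      obtain ⟨w, hw, hpw⟩ := hp
      exact ihP (hL w hw) p hpw


/- ### membership producers -/

lemma mem_first_of {α : RegularExpression σ} {a : σ} {j : ℕ} {w : List (σ × ℕ)}
    (h : ((a, j) :: w) ∈ (marked α).matches') : j ∈ first α := ⟨a, w, h⟩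

lemma mem_last_of {α : RegularExpression σ} {a : σ} {j : ℕ} {w : List (σ × ℕ)}
    (h : (w ++ [(a, j)]) ∈ (marked α).matches') : j ∈ last α := ⟨a, w, h⟩

lemma mem_follow_of {α : RegularExpression σ} {a b : σ} {i j : ℕ} {u v : List (σ × ℕ)}
    (h : (u ++ (a, i) :: (b, j) :: v) ∈ (marked α).matches') (hi : i ≠ 0) :
    j ∈ follow α i := by
  rw [follow, if_neg hi]
  exact ⟨a, b, u, v, h⟩

lemma mem_follow_iff {α : RegularExpression σ} {i j : ℕ} (hi : i ≠ 0) :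
    j ∈ follow α i ↔ ∃ a b u v, (u ++ (a, i) :: (b, j) :: v) ∈ (marked α).matches' := by
  rw [follow, if_neg hi]; rfl

lemma mem_first_bounds {α : RegularExpression σ} {j : ℕ} (h : j ∈ first α) :
    1 ≤ j ∧ j ≤ alph α := by
  obtain ⟨a, w, hw⟩ := h
  have := mem_marked_bounds hw (a, j) (by simp)
  exact ⟨this.1, this.2.1⟩

lemma mem_last_bounds {α : RegularExpression σ} {j : ℕ} (h : j ∈ last α) :
    1 ≤ j ∧ j ≤ alph α := by
  obtain ⟨a, w, hw⟩ := h
  have := mem_marked_bounds hw (a, j) (by simp)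
  exact ⟨this.1, this.2.1⟩

lemma mem_follow_bounds {α : RegularExpression σ} {i j : ℕ} (hi : i ≠ 0)
    (h : j ∈ follow α i) : (1 ≤ i ∧ i ≤ alph α) ∧ 1 ≤ j ∧ j ≤ alph α := by
  rw [mem_follow_iff hi] at h
  obtain ⟨a, b, u, v, hw⟩ := h
  have h1 := mem_marked_bounds hw (a, i) (by simp)
  have h2 := mem_marked_bounds hw (b, j) (by simp)
  exact ⟨⟨h1.1, h1.2.1⟩, h2.1, h2.2.1⟩

/- ### unmapping -/

lemma unmap_cons {n : ℕ} {W w : List (σ × ℕ)} {a : σ} {j : ℕ}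
    (h : W.map (shf n) = (a, j) :: w) :
    ∃ j' w', W = (a, j') :: w' ∧ j = j' + n := by
  rw [List.map_eq_cons_iff] at h
  obtain ⟨p, l, rfl, hp, hl⟩ := h
  have h1 : p.1 = a := congrArg Prod.fst hp
  have h2 : p.2 + n = j := congrArg Prod.snd hp
  refine ⟨p.2, l, ?_, h2.symm⟩
  rw [← h1]

lemma unmap_concat {n : ℕ} {W w : List (σ × ℕ)} {a : σ} {j : ℕ}
    (h : W.map (shf n) = w ++ [(a, j)]) :
    ∃ w' j', W = w' ++ [(a, j')] ∧ j = j' + n := by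
  rw [List.map_eq_append_iff] at h
  obtain ⟨l₁, l₂, rfl, _, hl₂⟩ := h
  rw [List.map_eq_cons_iff] at hl₂
  obtain ⟨p, l, rfl, hp, hl⟩ := hl₂
  rw [List.map_eq_nil_iff] at hl
  subst hl
  have h1 : p.1 = a := congrArg Prod.fst hp
  have h2 : p.2 + n = j := congrArg Prod.snd hp
  refine ⟨l₁, p.2, ?_, h2.symm⟩
  rw [← h1]

lemma unmap_adj {n : ℕ} {W u v : List (σ × ℕ)} {a b : σ} {i j : ℕ}
    (h : W.map (shf n) = u ++ (a, i) :: (b, j) :: v) :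
    ∃ u' v' i' j', W = u' ++ (a, i') :: (b, j') :: v' ∧ i = i' + n ∧ j = j' + n := by
  rw [List.map_eq_append_iff] at h
  obtain ⟨l₁, l₂, rfl, _, hl₂⟩ := h
  obtain ⟨i', w', rfl, hj⟩ := unmap_cons hl₂
  have : w'.map (shf n) = (b, j) :: v := by
    simpa using congrArg List.tail hl₂
  obtain ⟨j', w'', rfl, hj'⟩ := unmap_cons this
  exact ⟨l₁, w'', i', j', rfl, hj, hj'⟩

/- ### inversion lemmas -/

lemma first_plus {P Q : RegularExpression σ} {j : ℕ} (h : j ∈ first (plus P Q)) :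
    j ∈ first P ∨ (alph P < j ∧ j - alph P ∈ first Q) := by
  obtain ⟨a, w, hw⟩ := h
  rcases matches_marked_plus.mp hw with hv | hv
  · exact Or.inl ⟨a, w, hv⟩
  · rw [mem_mark_iff] at hv
    obtain ⟨W, hW, hmap⟩ := hv
    obtain ⟨j', w', rfl, rfl⟩ := unmap_cons hmap
    have hb := mem_marked_bounds hW (a, j') (by simp)
    refine Or.inr ⟨by omega, ?_⟩
    simpa [show j' + alph P - alph P = j' by omega] using mem_first_of hW

lemma last_plus {P Q : RegularExpression σ} {j : ℕ} (h : j ∈ last (plus P Q)) :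
    j ∈ last P ∨ (alph P < j ∧ j - alph P ∈ last Q) := by
  obtain ⟨a, w, hw⟩ := h
  rcases matches_marked_plus.mp hw with hv | hv
  · exact Or.inl ⟨a, w, hv⟩
  · rw [mem_mark_iff] at hv
    obtain ⟨W, hW, hmap⟩ := hv
    obtain ⟨w', j', rfl, rfl⟩ := unmap_concat hmap
    have hb := mem_marked_bounds hW (a, j') (by simp)
    refine Or.inr ⟨by omega, ?_⟩
    simpa [show j' + alph P - alph P = j' by omega] using mem_last_of hW

lemma follow_plus {P Q : RegularExpression σ} {i j : ℕ} (hi : i ≠ 0)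
    (h : j ∈ follow (plus P Q) i) :
    j ∈ follow P i ∨
      (alph P < i ∧ alph P < j ∧ j - alph P ∈ follow Q (i - alph P)) := by
  rw [mem_follow_iff hi] at h
  obtain ⟨a, b, u, v, hw⟩ := h
  rcases matches_marked_plus.mp hw with hv | hv
  · exact Or.inl (mem_follow_of hv hi)
  · rw [mem_mark_iff] at hv
    obtain ⟨W, hW, hmap⟩ := hv
    obtain ⟨u', v', i', j', rfl, rfl, rfl⟩ := unmap_adj hmap
    have hb1 := mem_marked_bounds hW (a, i') (by simp)
    have hb2 := mem_marked_bounds hW (b, j') (by simp)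
    refine Or.inr ⟨by omega, by omega, ?_⟩
    rw [show i' + alph P - alph P = i' by omega, show j' + alph P - alph P = j' by omega]
    exact mem_follow_of hW (by omega)

lemma first_comp {P Q : RegularExpression σ} {j : ℕ} (h : j ∈ first (comp P Q)) :
    j ∈ first P ∨ ([] ∈ P.matches' ∧ alph P < j ∧ j - alph P ∈ first Q) := by
  obtain ⟨a, w, hw⟩ := h
  obtain ⟨x, hx, y, hy, hxy⟩ := matches_marked_comp.mp hw
  rcases x with _ | ⟨p, x'⟩
  · simp only [List.nil_append] at hxy
    rw [mem_mark_iff] at hy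
    obtain ⟨W, hW, hmap⟩ := hy
    rw [hxy] at hmap
    obtain ⟨j', w', rfl, rfl⟩ := unmap_cons hmap
    have hb := mem_marked_bounds hW (a, j') (by simp)
    refine Or.inr ⟨?_, by omega, ?_⟩
    · rw [← nil_mem_mark (n := 0)]; exact hx
    · simpa [show j' + alph P - alph P = j' by omega] using mem_first_of hW
  · simp only [List.cons_append, List.cons.injEq] at hxy
    obtain ⟨rfl, _⟩ := hxy
    exact Or.inl ⟨a, x', hx⟩

lemma last_comp {P Q : RegularExpression σ} {j : ℕ} (h : j ∈ last (comp P Q)) :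
    (j ∈ last P ∧ [] ∈ Q.matches') ∨ (alph P < j ∧ j - alph P ∈ last Q) := by
  obtain ⟨a, w, hw⟩ := h
  obtain ⟨x, hx, y, hy, hxy⟩ := matches_marked_comp.mp hw
  rw [mem_mark_iff] at hy
  obtain ⟨W, hW, hmapW⟩ := hy
  have hright : ∀ y', y = y' ++ [(a, j)] → alph P < j ∧ j - alph P ∈ last Q := by
    intro y' hy'
    rw [hy'] at hmapW
    obtain ⟨w', j', hWeq, rfl⟩ := unmap_concat hmapW
    rw [hWeq] at hW
    have hb := mem_marked_bounds hW (a, j') (by simp)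
    refine ⟨by omega, ?_⟩
    simpa [show j' + alph P - alph P = j' by omega] using mem_last_of hW
  have hleft : y = [] → j ∈ last P ∧ [] ∈ Q.matches' := by
    intro hy0
    subst hy0
    rw [List.append_nil] at hxy
    rw [List.map_eq_nil_iff] at hmapW
    subst hmapW
    refine ⟨⟨a, w, by rw [← hxy]; exact hx⟩, ?_⟩
    rw [← nil_mem_mark (n := 0)]; exact hW
  rcases List.append_eq_append_iff.mp hxy with ⟨a', _, ha2⟩ | ⟨c', hc1, hc2⟩
  · exact Or.inr (hright a' ha2)
  · rcases c' with _ | ⟨z, c''⟩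
    · simp only [List.nil_append] at hc2
      exact Or.inr (hright [] (by simp [← hc2]))
    · simp only [List.cons_append, List.cons.injEq] at hc2
      obtain ⟨h1, h2⟩ := hc2
      obtain ⟨rfl, rfl⟩ := List.append_eq_nil_iff.mp h2.symm
      exact Or.inl (hleft rfl)

lemma follow_comp {P Q : RegularExpression σ} {i j : ℕ} (hi : i ≠ 0)
    (h : j ∈ follow (comp P Q) i) :
    j ∈ follow P i ∨ (i ∈ last P ∧ alph P < j ∧ j - alph P ∈ first Q) ∨
      (alph P < i ∧ alph P < j ∧ j - alph P ∈ follow Q (i - alph P)) := by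
  rw [mem_follow_iff hi] at h
  obtain ⟨a, b, u, v, hw⟩ := h
  obtain ⟨x, hx, y, hy, hxy⟩ := matches_marked_comp.mp hw
  rcases append_adj hxy with ⟨u', v', hx'⟩ | ⟨u', v', hy'⟩ | ⟨⟨u', hx'⟩, v', hy'⟩
  · rw [hx'] at hx
    exact Or.inl (mem_follow_of hx hi)
  · rw [mem_mark_iff] at hy
    obtain ⟨W, hW, hmap⟩ := hy
    rw [hy'] at hmap
    obtain ⟨u'', v'', i', j', rfl, rfl, rfl⟩ := unmap_adj hmap
    have hb1 := mem_marked_bounds hW (a, i') (by simp)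
    have hb2 := mem_marked_bounds hW (b, j') (by simp)
    refine Or.inr (Or.inr ⟨by omega, by omega, ?_⟩)
    rw [show i' + alph P - alph P = i' by omega, show j' + alph P - alph P = j' by omega]
    exact mem_follow_of hW (by omega)
  · rw [hx'] at hx
    rw [mem_mark_iff] at hy
    obtain ⟨W, hW, hmap⟩ := hy
    rw [hy'] at hmap
    obtain ⟨j', w', rfl, rfl⟩ := unmap_cons hmap
    have hb := mem_marked_bounds hW (b, j') (by simp)
    refine Or.inr (Or.inl ⟨⟨a, u', hx⟩, by omega, ?_⟩)
    simpa [show j' + alph P - alph P = j' by omega] using mem_first_of hW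

lemma first_star {P : RegularExpression σ} {j : ℕ} (h : j ∈ first (P.star)) :
    j ∈ first P := by
  obtain ⟨a, w, hw⟩ := h
  obtain ⟨L, hL, hmem⟩ := matches_marked_star.mp hw
  obtain ⟨s, hs⟩ := head_flatten hL.symm
  exact ⟨a, s, hmem _ hs⟩

lemma last_star {P : RegularExpression σ} {j : ℕ} (h : j ∈ last (P.star)) :
    j ∈ last P := by
  obtain ⟨a, w, hw⟩ := h
  obtain ⟨L, hL, hmem⟩ := matches_marked_star.mp hw
  obtain ⟨s, hs⟩ := last_flatten hL.symm
  exact ⟨a, s, hmem _ hs⟩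

lemma follow_star {P : RegularExpression σ} {i j : ℕ} (hi : i ≠ 0)
    (h : j ∈ follow (P.star) i) :
    j ∈ follow P i ∨ (i ∈ last P ∧ j ∈ first P) := by
  rw [mem_follow_iff hi] at h
  obtain ⟨a, b, u, v, hw⟩ := h
  obtain ⟨L, hL, hmem⟩ := matches_marked_star.mp hw
  rcases flatten_adj hL.symm with ⟨w', hw', u', v', hsplit⟩ |
      ⟨w₁, h₁, w₂, h₂, ⟨u', hu'⟩, v', hv'⟩
  · rw [hsplit] at hw'
    exact Or.inl (mem_follow_of (hmem _ hw') hi)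
  · refine Or.inr ⟨⟨a, u', ?_⟩, b, v', ?_⟩
    · rw [← hu']; exact hmem _ h₁
    · rw [← hv']; exact hmem _ h₂


/- ### main backward lemma -/

def Fol (α : RegularExpression σ) : σ × ℕ → σ × ℕ → Prop := fun p q => q.2 ∈ follow α p.2

lemma first_le_star {P : RegularExpression σ} : first P ⊆ first (P.star) := by
  rintro j ⟨a, w, hw⟩
  exact ⟨a, w, matches_marked_star.mpr ⟨[(a, j) :: w], by simp, by simp [hw]⟩⟩

lemma head?_append_left {l₁ l₂ : List γ} (h : l₁ ≠ []) : (l₁ ++ l₂).head? = l₁.head? := by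
  rcases l₁ with _ | ⟨x, t⟩
  · exact absurd rfl h
  · simp

lemma getLast?_append_right {l₁ l₂ : List γ} (h : l₂ ≠ []) :
    (l₁ ++ l₂).getLast? = l₂.getLast? := by
  rw [List.getLast?_append]
  rcases List.exists_cons_of_ne_nil h with ⟨x, t, rfl⟩
  rcases (x :: t).getLast?.eq_none_or_eq_some with h' | ⟨y, h'⟩
  · simp [List.getLast?_eq_none_iff] at h'
  · simp [h']

lemma main_star_aux {P : RegularExpression σ}
    (ihP : ∀ {w : List (σ × ℕ)}, w ≠ [] → (∀ x ∈ w.head?, x.2 ∈ first P) →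
      List.Chain' (Fol P) w → (∀ x ∈ w.getLast?, x.2 ∈ last P) →
      (∀ x ∈ w, letterAt P x.2 = some x.1) → w ∈ (marked P).matches') :
    ∀ (n : ℕ) (w : List (σ × ℕ)), w.length ≤ n → w ≠ [] →
      (∀ x ∈ w.head?, x.2 ∈ first P) → List.Chain' (Fol (P.star)) w →
      (∀ x ∈ w.getLast?, x.2 ∈ last P) →
      (∀ x ∈ w, letterAt P x.2 = some x.1) → w ∈ (marked (P.star)).matches' := by
  intro n
  induction n with
  | zero =>
      intro w hlen hne _ _ _ _
      exact absurd (List.length_eq_zero_iff.mp (Nat.le_zero.mp hlen)) hne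
  | succ n ihn =>
      intro w hlen hne h1 h2 h3 h4
      have hpos : ∀ x ∈ w, 1 ≤ x.2 := fun x hx => (letterAt_le (h4 x hx)).1
      by_cases hP : List.Chain' (Fol P) w
      · have hw := ihP hne h1 hP h3 h4
        exact matches_marked_star.mpr ⟨[w], by simp, by simp [hw]⟩
      · obtain ⟨u, x, y, t, rfl, hchS, hRxy, hnS⟩ := not_chain'_split h2 hP
        have hx2 : x.2 ≠ 0 := by
          have := hpos x (by simp)
          omega
        have hcross : x.2 ∈ last P ∧ y.2 ∈ first P := by
          rcases follow_star hx2 hRxy with h' | h'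
          · exact absurd h' hnS
          · exact h'
        have hw₁ : (u ++ [x]) ∈ (marked P).matches' := by
          refine ihP (by simp) ?_ hchS ?_ ?_
          · intro z hz
            apply h1
            have he : (u ++ x :: y :: t).head? = (u ++ [x]).head? := by cases u <;> simp
            rwa [he]
          · intro z hz
            rw [List.getLast?_concat] at hz
            simp at hz
            subst hz
            exact hcross.1
          · intro z hz
            apply h4
            rcases List.mem_append.mp hz with hz | hz
            · simp [hz]
            · simp at hz; simp [hz]
        have hw₂ : (y :: t) ∈ (marked (P.star)).matches' := by
          refine ihn (y :: t) ?_ (by simp) ?_ ?_ ?_ ?_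
          · have := hlen
            simp at this ⊢
            omega
          · intro z hz
            simp at hz
            subst hz
            exact hcross.2
          · refine h2.suffix ⟨u ++ [x], by simp⟩
          · intro z hz
            apply h3
            rw [show u ++ x :: y :: t = (u ++ [x]) ++ (y :: t) by simp,
              getLast?_append_right (by simp)]
            exact hz
          · intro z hz
            apply h4
            simp at hz ⊢
            tauto
        obtain ⟨L, hLf, hLm⟩ := matches_marked_star.mp hw₂
        refine matches_marked_star.mpr ⟨(u ++ [x]) :: L, ?_, ?_⟩
        · simp [← hLf]
        · intro z hz
          rcases List.mem_cons.mp hz with rfl | hz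
          · exact hw₁
          · exact hLm z hz

lemma main {α : RegularExpression σ} :
    ∀ {w : List (σ × ℕ)}, w ≠ [] →
      (∀ x ∈ w.head?, x.2 ∈ first α) →
      List.Chain' (Fol α) w →
      (∀ x ∈ w.getLast?, x.2 ∈ last α) →
      (∀ x ∈ w, letterAt α x.2 = some x.1) →
      w ∈ (marked α).matches' := by
  induction α with
  | zero =>
      intro w hne _ _ _ h4
      rcases List.exists_cons_of_ne_nil hne with ⟨x, t, rfl⟩
      have := h4 x (by simp)
      simp [letterAt] at this
  | epsilon =>
      intro w hne _ _ _ h4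
      rcases List.exists_cons_of_ne_nil hne with ⟨x, t, rfl⟩
      have := h4 x (by simp)
      simp [letterAt] at this
  | char a =>
      intro w hne _ h2 _ h4
      rcases List.exists_cons_of_ne_nil hne with ⟨x, t, rfl⟩
      have hx := h4 x (by simp)
      simp only [letterAt] at hx
      split at hx
      case isFalse => simp at hx
      case isTrue hx1 =>
        simp only [Option.some.injEq] at hx
        have hxeq : x = (a, 1) := by
          rcases x with ⟨xa, xi⟩
          simp_all
        subst hxeq
        rcases t with _ | ⟨y, t'⟩
        · show _ ∈ (marked (char a)).matches'
          exact rfl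
        · exfalso
          have hy : Fol (char a) (a, 1) y := (List.isChain_cons_cons.mp h2).1
          have : y.2 ∈ follow (char a) 1 := hy
          rw [mem_follow_iff (by norm_num)] at this
          obtain ⟨c, d, u, v, huv⟩ := this
          have : (u ++ (c, 1) :: (d, y.2) :: v) ∈ ({[((a : σ), 1)]} : Set (List (σ × ℕ))) := huv
          rw [Set.mem_singleton_iff] at this
          rcases u with _ | ⟨_, _⟩ <;> simp at this
  | plus P Q ihP ihQ =>
      intro w hne h1 h2 h3 h4
      have hpos : ∀ x ∈ w, 1 ≤ x.2 := fun x hx => (letterAt_le (h4 x hx)).1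
      rcases List.exists_cons_of_ne_nil hne with ⟨x₀, t₀, hw0⟩
      have hhd : x₀.2 ∈ first (plus P Q) := h1 x₀ (by simp [hw0])
      by_cases hx0 : x₀.2 ≤ alph P
      · -- everything stays in P
        have hall : ∀ z ∈ w, z.2 ≤ alph P := by
          refine chain'_induct h2 ?_ ?_
          · intro z hz; rw [hw0] at hz; simp at hz; subst hz; exact hx0
          · intro a ha b hPa hab
            have ha2 : a.2 ≠ 0 := by have := hpos a ha; omega
            rcases follow_plus ha2 hab with h' | h'
            · exact (mem_follow_bounds ha2 h').2.2
            · omega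
        have hmem : w ∈ (marked P).matches' := by
          refine ihP hne ?_ ?_ ?_ ?_
          · intro z hz
            have hzw : z ∈ w := List.mem_of_mem_head? hz
            rcases first_plus (h1 z hz) with h' | h'
            · exact h'
            · exact absurd h'.1 (by have := hall z hzw; omega)
          · refine chain'_mono_mem ?_ h2
            intro a ha b hb hab
            have ha2 : a.2 ≠ 0 := by have := hpos a ha; omega
            rcases follow_plus ha2 hab with h' | h'
            · exact h'
            · exact absurd h'.1 (by have := hall a ha; omega)
          · intro z hz
            have hzw : z ∈ w := List.mem_of_mem_getLast? hz
            rcases last_plus (h3 z hz) with h' | h'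
            · exact h'
            · exact absurd h'.1 (by have := hall z hzw; omega)
          · intro z hz
            have := h4 z hz
            simp only [letterAt] at this
            rwa [if_pos (hall z hz)] at this
        exact matches_marked_plus.mpr (Or.inl hmem)
      · -- everything stays in Q
        have hall : ∀ z ∈ w, alph P < z.2 := by
          refine chain'_induct h2 ?_ ?_
          · intro z hz; rw [hw0] at hz; simp at hz; subst hz; omega
          · intro a ha b hPa hab
            have ha2 : a.2 ≠ 0 := by have := hpos a ha; omega
            rcases follow_plus ha2 hab with h' | h'
            · exact absurd (mem_follow_bounds ha2 h').1.2 (by omega)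
            · omega
        have hmem : w.map (dwn (alph P)) ∈ (marked Q).matches' := by
          refine ihQ (by simpa using hne) ?_ ?_ ?_ ?_
          · intro z hz
            rw [List.head?_map] at hz
            rcases hz' : w.head? with _ | y
            · rw [hz'] at hz; simp at hz
            · rw [hz'] at hz
              simp at hz
              subst hz
              have hyw : y ∈ w := List.mem_of_mem_head? hz'
              rcases first_plus (h1 y hz') with h' | h'
              · exact absurd (mem_first_bounds h').2 (by have := hall y hyw; omega)
              · exact h'.2
          · rw [List.Chain', List.isChain_map]
            refine chain'_mono_mem ?_ h2
            intro a ha b hb hab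
            have ha2 : a.2 ≠ 0 := by have := hpos a ha; omega
            rcases follow_plus ha2 hab with h' | h'
            · exact absurd (mem_follow_bounds ha2 h').1.2 (by have := hall a ha; omega)
            · exact h'.2.2
          · intro z hz
            rw [List.getLast?_map] at hz
            rcases hz' : w.getLast? with _ | y
            · rw [hz'] at hz; simp at hz
            · rw [hz'] at hz
              simp at hz
              subst hz
              have hyw : y ∈ w := List.mem_of_mem_getLast? hz'
              rcases last_plus (h3 y hz') with h' | h'
              · exact absurd (mem_last_bounds h').2 (by have := hall y hyw; omega)
              · exact h'.2
          · intro z hz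
            rw [List.mem_map] at hz
            obtain ⟨q, hq, rfl⟩ := hz
            have := h4 q hq
            simp only [letterAt] at this
            rwa [if_neg (by have := hall q hq; omega)] at this
        refine matches_marked_plus.mpr (Or.inr ?_)
        rw [mem_mark_iff]
        refine ⟨w.map (dwn (alph P)), hmem, ?_⟩
        rw [List.map_map]
        refine (List.map_congr_left ?_).trans (List.map_id w)
        intro q hq
        have := hall q hq
        simp only [Function.comp, shf, dwn, id]
        have : q.2 - alph P + alph P = q.2 := by omega
        rw [this]
  | comp P Q ihP ihQ =>
      intro w hne h1 h2 h3 h4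
      have hpos : ∀ x ∈ w, 1 ≤ x.2 := fun x hx => (letterAt_le (h4 x hx)).1
      set n := alph P with hn
      set w₁ := w.takeWhile (fun q => decide (q.2 ≤ n)) with hw₁def
      set w₂ := w.dropWhile (fun q => decide (q.2 ≤ n)) with hw₂def
      have hsplit : w₁ ++ w₂ = w := List.takeWhile_append_dropWhile ..
      have hw₁all : ∀ z ∈ w₁, z.2 ≤ n := by
        intro z hz
        simpa using List.mem_takeWhile_imp hz
      have hw₁sub : ∀ z ∈ w₁, z ∈ w := fun z hz => by
        rw [← hsplit]; exact List.mem_append.mpr (Or.inl hz)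
      have hw₂sub : ∀ z ∈ w₂, z ∈ w := fun z hz => by
        rw [← hsplit]; exact List.mem_append.mpr (Or.inr hz)
      have hch₂ : List.Chain' (Fol (comp P Q)) w₂ := h2.suffix ⟨w₁, hsplit⟩
      have hw₂head : ∀ z ∈ w₂.head?, n < z.2 := by
        intro z hz
        have h' := List.head?_dropWhile_not (fun q => decide (q.2 ≤ n)) w
        rw [← hw₂def, hz] at h'
        simpa using h'
      have hw₂all : ∀ z ∈ w₂, n < z.2 := by
        refine chain'_induct hch₂ hw₂head ?_
        intro a ha b hPa hab
        have ha2 : a.2 ≠ 0 := by have := hpos a (hw₂sub a ha); omega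
        rcases follow_comp ha2 hab with h' | h' | h'
        · exact absurd (mem_follow_bounds ha2 h').1.2 (by omega)
        · exact absurd (mem_last_bounds h'.1).2 (by omega)
        · omega
      by_cases hw₂nil : w₂ = []
      · -- everything is in P, Q contributes ε
        have hw₁eq : w₁ = w := by rw [← hsplit, hw₂nil, List.append_nil]
        have hall : ∀ z ∈ w, z.2 ≤ n := fun z hz => hw₁all z (by rw [hw₁eq]; exact hz)
        have hy := List.getLast?_eq_getLast hne
        have hy3 := h3 _ hy
        have hym : w.getLast hne ∈ w := List.getLast_mem hne
        rcases last_comp hy3 with h' | h'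
        · have hPmem : w ∈ (marked P).matches' := by
            refine ihP hne ?_ ?_ ?_ ?_
            · intro z hz
              rcases first_comp (h1 z hz) with h'' | h''
              · exact h''
              · exact absurd h''.2.1 (by have := hall z (List.mem_of_mem_head? hz); omega)
            · refine chain'_mono_mem ?_ h2
              intro a ha b hb hab
              have ha2 : a.2 ≠ 0 := by have := hpos a ha; omega
              rcases follow_comp ha2 hab with h'' | h'' | h''
              · exact h''
              · exact absurd h''.2.1 (by have := hall b hb; omega)
              · exact absurd h''.1 (by have := hall a ha; omega)
            · intro z hz
              rcases last_comp (h3 z hz) with h'' | h''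
              · exact h''.1
              · exact absurd h''.1 (by have := hall z (List.mem_of_mem_getLast? hz); omega)
            · intro z hz
              have := h4 z hz
              simp only [letterAt] at this
              rwa [if_pos (hall z hz)] at this
          refine matches_marked_comp.mpr ⟨w, hPmem, [], ?_, List.append_nil w⟩
          exact nil_mem_mark.mpr h'.2
        · exact absurd h'.1 (by have := hall _ hym; omega)
      · -- w₂ nonempty
        have hcross : ∀ x ∈ w₁.getLast?, ∀ z ∈ w₂.head?,
            x.2 ∈ last P ∧ z.2 - n ∈ first Q := by
          intro x hx z hz
          have h2' := h2
          rw [← hsplit] at h2'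
          have hlink := (List.isChain_append.mp h2').2.2 x hx z hz
          have hxle : x.2 ≤ n := hw₁all x (List.mem_of_mem_getLast? hx)
          have hxpos : x.2 ≠ 0 := by
            have := hpos x (hw₁sub x (List.mem_of_mem_getLast? hx)); omega
          have hz2 := hw₂head z hz
          rcases follow_comp hxpos hlink with h' | h' | h'
          · exact absurd (mem_follow_bounds hxpos h').2.2 (by omega)
          · exact ⟨h'.1, h'.2.2⟩
          · omega
        have hhead₂ : ∀ z ∈ w₂.head?, z.2 - n ∈ first Q := by
          intro z hz
          by_cases hw₁nil : w₁ = []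
          · have hzw : w.head? = some z := by
              rw [← hsplit, hw₁nil, List.nil_append]; exact hz
            rcases first_comp (h1 z hzw) with h'' | h''
            · exact absurd (mem_first_bounds h'').2 (by have := hw₂head z hz; omega)
            · exact h''.2.2
          · have hx := List.getLast?_eq_getLast hw₁nil
            exact (hcross _ hx z hz).2
        have hQmem : w₂.map (dwn n) ∈ (marked Q).matches' := by
          refine ihQ (by simpa using hw₂nil) ?_ ?_ ?_ ?_
          · intro z hz
            rw [List.head?_map] at hz
            rcases hz' : w₂.head? with _ | y
            · rw [hz'] at hz; simp at hz
            · rw [hz'] at hz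
              simp at hz
              subst hz
              exact hhead₂ y hz'
          · rw [List.Chain', List.isChain_map]
            refine chain'_mono_mem ?_ hch₂
            intro a ha b hb hab
            have ha2 : a.2 ≠ 0 := by have := hpos a (hw₂sub a ha); omega
            rcases follow_comp ha2 hab with h' | h' | h'
            · exact absurd (mem_follow_bounds ha2 h').1.2
                (by have := hw₂all a ha; omega)
            · exact absurd (mem_last_bounds h'.1).2 (by have := hw₂all a ha; omega)
            · exact h'.2.2
          · intro z hz
            rw [List.getLast?_map] at hz
            rcases hz' : w₂.getLast? with _ | y
            · rw [hz'] at hz; simp at hz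
            · rw [hz'] at hz
              simp at hz
              subst hz
              have hyw : w.getLast? = some y := by
                rw [← hsplit, getLast?_append_right hw₂nil]; exact hz'
              rcases last_comp (h3 y hyw) with h'' | h''
              · exact absurd (mem_last_bounds h''.1).2
                  (by have := hw₂all y (List.mem_of_mem_getLast? hz'); omega)
              · exact h''.2
          · intro z hz
            rw [List.mem_map] at hz
            obtain ⟨q, hq, rfl⟩ := hz
            have := h4 q (hw₂sub q hq)
            simp only [letterAt] at this
            rwa [if_neg (by have := hw₂all q hq; omega)] at this
        have hQ' : w₂ ∈ (mark Q n).matches' := by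
          rw [mem_mark_iff]
          refine ⟨w₂.map (dwn n), hQmem, ?_⟩
          rw [List.map_map]
          refine (List.map_congr_left ?_).trans (List.map_id w₂)
          intro q hq
          have := hw₂all q hq
          simp only [Function.comp, shf, dwn, id]
          have heq : q.2 - n + n = q.2 := by omega
          rw [heq]
        by_cases hw₁nil : w₁ = []
        · have hweq : w = w₂ := by rw [← hsplit, hw₁nil, List.nil_append]
          have hz : w.head? = some (w.head hne) := List.head?_eq_head hne
          rcases first_comp (h1 _ hz) with h'' | h''
          · refine absurd (mem_first_bounds h'').2 ?_
            have := hw₂head (w.head hne) (by rw [← hweq]; exact hz)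
            omega
          · refine matches_marked_comp.mpr ⟨[], ?_, w₂, hQ', by rw [List.nil_append, hweq]⟩
            exact nil_mem_mark.mpr h''.1
        · have hx := List.getLast?_eq_getLast hw₁nil
          have hz2 := List.head?_eq_head (l := w₂) hw₂nil
          have hlastP : (w₁.getLast hw₁nil).2 ∈ last P :=
            (hcross _ hx _ hz2).1
          have hPmem : w₁ ∈ (marked P).matches' := by
            refine ihP hw₁nil ?_ ?_ ?_ ?_
            · intro z hz
              have hzw : w.head? = some z := by
                rw [← hsplit, head?_append_left hw₁nil]; exact hz
              rcases first_comp (h1 z hzw) with h'' | h''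
              · exact h''
              · exact absurd h''.2.1
                  (by have := hw₁all z (List.mem_of_mem_head? hz); omega)
            · have h2' := h2
              rw [← hsplit] at h2'
              refine chain'_mono_mem ?_ ((List.isChain_append.mp h2').1)
              intro a ha b hb hab
              have ha2 : a.2 ≠ 0 := by have := hpos a (hw₁sub a ha); omega
              rcases follow_comp ha2 hab with h' | h' | h'
              · exact h'
              · exact absurd h'.2.1 (by have := hw₁all b hb; omega)
              · exact absurd h'.1 (by have := hw₁all a ha; omega)
            · intro z hz
              rw [hx] at hz
              simp at hz
              subst hz
              exact hlastP
            · intro z hz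
              have := h4 z (hw₁sub z hz)
              simp only [letterAt] at this
              rwa [if_pos (hw₁all z hz)] at this
          exact matches_marked_comp.mpr ⟨w₁, hPmem, w₂, hQ', hsplit⟩
  | star P ihP =>
      intro w hne h1 h2 h3 h4
      refine main_star_aux (fun {w} a b c d e => ihP a b c d e) w.length w le_rfl hne ?_ ?_ ?_ ?_
      · intro z hz; exact first_star (h1 z hz)
      · exact h2
      · intro z hz; exact last_star (h3 z hz)
      · intro z hz; exact h4 z hz


/-- `Pos₀(α) = {0, 1, …, |α|_Σ}` as a type. -/
def Pos0 (α : RegularExpression σ) : Type _ := {i : ℕ // i ≤ alph α}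

/-- The final-state set: `last(α) ∪ {0}` if `ε ∈ L(α)`, else `last(α)`. -/

noncomputable def lastZero (α : RegularExpression σ) : Set ℕ :=
  if [] ∈ α.matches' then last α ∪ {0} else last α

/-- The Glushkov position automaton of `α`. -/
noncomputable def posNFA (α : RegularExpression σ) : NFA σ (Pos0 α) where
  step := fun i a => {j | j.1 ∈ follow α i.1 ∧ letterAt α j.1 = some a}
  start := {i | i.1 = 0}
  accept := {i | i.1 ∈ lastZero α}

/- ### forward facts -/

lemma marked_head_first {α : RegularExpression σ} {v : List (σ × ℕ)}
    (hv : v ∈ (marked α).matches') : ∀ x ∈ v.head?, x.2 ∈ first α := by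
  intro x hx
  rcases v with _ | ⟨z, t⟩
  · simp at hx
  · rw [List.head?_cons, Option.mem_some_iff] at hx
    subst hx
    exact ⟨z.1, t, by simpa using hv⟩

lemma marked_chain {α : RegularExpression σ} {v : List (σ × ℕ)}
    (hv : v ∈ (marked α).matches') : List.Chain' (Fol α) v := by
  refine chain'_of_splits ?_
  intro u x y t ht
  subst ht
  have hx0 : x.2 ≠ 0 := by
    have := (mem_marked_bounds hv x (by simp)).1
    omega
  exact mem_follow_of (a := x.1) (b := y.1) (by simpa using hv) hx0

lemma marked_last {α : RegularExpression σ} {v : List (σ × ℕ)}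
    (hv : v ∈ (marked α).matches') (h : v ≠ []) : (v.getLast h).2 ∈ last α := by
  refine mem_last_of (a := (v.getLast h).1) (w := v.dropLast) ?_
  have := List.dropLast_append_getLast h
  simpa [this] using hv

/- ### the eval characterization -/

lemma posNFA_eval_iff {α : RegularExpression σ} (w : List σ) :
    ∀ (q : Pos0 α), q ∈ (posNFA α).eval w ↔
      ∃ v : List (σ × ℕ), v.map Prod.fst = w ∧
        (∀ x ∈ v.head?, x.2 ∈ first α) ∧ List.Chain' (Fol α) v ∧
        (∀ x ∈ v, letterAt α x.2 = some x.1) ∧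
        ((v = [] ∧ q.1 = 0) ∨ ∃ h : v ≠ [], (v.getLast h).2 = q.1) := by
  induction w using List.reverseRecOn with
  | nil =>
      intro q
      constructor
      · intro hq
        exact ⟨[], rfl, by simp, List.isChain_nil, by simp, Or.inl ⟨rfl, hq⟩⟩
      · rintro ⟨v, hmap, _, _, _, hlast⟩
        have hv : v = [] := by
          rw [List.map_eq_nil_iff] at hmap; exact hmap
        rcases hlast with ⟨_, h0⟩ | ⟨hne, _⟩
        · exact h0
        · exact absurd hv hne
  | append_singleton w a ih =>
      intro q
      rw [NFA.eval_append_singleton, NFA.mem_stepSet]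
      constructor
      · rintro ⟨p, hp, hq1, hq2⟩
        obtain ⟨v, hmap, hhd, hch, hlet, hlast⟩ := (ih p).mp hp
        refine ⟨v ++ [(a, q.1)], by simp [hmap], ?_, ?_, ?_, ?_⟩
        · intro x hx
          rcases hlast with ⟨rfl, h0⟩ | ⟨hne, hql⟩
          · simp at hx
            subst hx
            have hf : q.1 ∈ follow α 0 := by rw [← h0]; exact hq1
            rwa [follow, if_pos rfl] at hf
          · rw [head?_append_left hne] at hx
            exact hhd x hx
        · rw [List.Chain', List.isChain_append]
          refine ⟨hch, List.isChain_singleton _, ?_⟩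
          intro x hx y hy
          simp at hy
          subst hy
          rcases hlast with ⟨rfl, h0⟩ | ⟨hne, hql⟩
          · simp at hx
          · have hx' : v.getLast hne = x := by
              rw [List.getLast?_eq_getLast hne] at hx
              simpa using hx
            subst hx'
            show q.1 ∈ follow α _
            rw [hql]
            exact hq1
        · intro x hx
          rcases List.mem_append.mp hx with hx | hx
          · exact hlet x hx
          · simp at hx
            subst hx
            exact hq2
        · refine Or.inr ⟨by simp, ?_⟩
          simp
      · rintro ⟨v, hmap, hhd, hch, hlet, hlast⟩
        have hvne : v ≠ [] := by
          intro h; rw [h] at hmap; simp at hmap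
        rw [List.map_eq_append_iff] at hmap
        obtain ⟨l₁, l₂, rfl, hm₁, hm₂⟩ := hmap
        rw [List.map_eq_cons_iff] at hm₂
        obtain ⟨y, l₂', rfl, hy1, hm₂'⟩ := hm₂
        rw [List.map_eq_nil_iff] at hm₂'
        subst hm₂'
        rcases hlast with ⟨habs, _⟩ | ⟨hne, hql⟩
        · simp at habs
        have hyq : y.2 = q.1 := by
          simp at hql
          exact hql
        have hylet : letterAt α y.2 = some y.1 := hlet y (by simp)
        rcases l₁ with _ | ⟨z, l₁'⟩
        · refine ⟨⟨0, Nat.zero_le _⟩, (ih _).mpr ⟨[], by simpa using hm₁, by simp, List.isChain_nil,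
            by simp, Or.inl ⟨rfl, rfl⟩⟩, ?_, ?_⟩
          · show q.1 ∈ follow α 0
            rw [follow, if_pos rfl, ← hyq]
            exact hhd y (by simp)
          · rw [← hyq, hylet, hy1]
        · set l₁ := z :: l₁' with hl₁
          have hl₁ne : l₁ ≠ [] := by simp [hl₁]
          set x := l₁.getLast hl₁ne with hxdef
          have hxmem : x ∈ l₁ := List.getLast_mem hl₁ne
          have hxlet : letterAt α x.2 = some x.1 := hlet x (by simp [hxmem])
          refine ⟨⟨x.2, (letterAt_le hxlet).2⟩, (ih _).mpr ⟨l₁, hm₁, ?_, ?_, ?_,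
            Or.inr ⟨hl₁ne, rfl⟩⟩, ?_, ?_⟩
          · intro z' hz'
            apply hhd
            rwa [head?_append_left hl₁ne]
          · exact (List.isChain_append.mp hch).1
          · intro z' hz'
            exact hlet z' (by simp [hz'])
          · show q.1 ∈ follow α x.2
            have := (List.isChain_append.mp hch).2.2 x
              (by rw [List.getLast?_eq_getLast hl₁ne]; simp; rfl) y (by simp)
            rw [← hyq]
            exact this
          · rw [← hyq, hylet, hy1]

/-- The position automaton accepts exactly `L(α)`. -/
theorem posNFA_accepts (α : RegularExpression σ) :
    (posNFA α).accepts = α.matches' := by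
  ext w
  constructor
  · rintro ⟨q, hqacc, hqev⟩
    obtain ⟨v, hmap, hhd, hch, hlet, hlast⟩ := (posNFA_eval_iff w q).mp hqev
    have hq : q.1 ∈ lastZero α := hqacc
    rcases hlast with ⟨rfl, hq0⟩ | ⟨hvne, hql⟩
    · have hw : w = [] := by simpa using hmap.symm
      subst hw
      rw [hq0] at hq
      by_cases hnil : [] ∈ α.matches'
      · exact hnil
      · rw [lastZero, if_neg hnil] at hq
        exact absurd (mem_last_bounds hq).1 (by omega)
    · have hq1 : 1 ≤ q.1 := by
        have hm := hlet (v.getLast hvne) (List.getLast_mem hvne)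
        have := (letterAt_le hm).1
        omega
      have hqlast : q.1 ∈ last α := by
        by_cases hnil : [] ∈ α.matches'
        · rw [lastZero, if_pos hnil] at hq
          rcases hq with hq | hq
          · exact hq
          · simp at hq; omega
        · rwa [lastZero, if_neg hnil] at hq
      have hv : v ∈ (marked α).matches' := by
        refine main hvne hhd hch ?_ hlet
        intro x hx
        have hx' : v.getLast hvne = x := by
          rw [List.getLast?_eq_getLast hvne] at hx
          simpa using hx
        rw [← hx', hql]
        exact hqlast
      rw [mem_matches_iff_unmark (n := 0)]
      exact ⟨v, hv, hmap⟩
  · intro hw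
    rw [mem_matches_iff_unmark (n := 0)] at hw
    obtain ⟨v, hv, hmap⟩ := hw
    have hv' : v ∈ (marked α).matches' := hv
    rcases eq_or_ne v [] with rfl | hvne
    · refine ⟨⟨0, Nat.zero_le _⟩, ?_, ?_⟩
      · show (0 : ℕ) ∈ lastZero α
        have h0 : [] ∈ α.matches' := nil_mem_mark.mp hv
        rw [lastZero, if_pos h0]
        exact Or.inr rfl
      · exact (posNFA_eval_iff w _).mpr ⟨[], hmap, by simp, List.isChain_nil, by simp,
          Or.inl ⟨rfl, rfl⟩⟩
    · have hbounds := mem_marked_bounds hv'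
      refine ⟨⟨(v.getLast hvne).2, (hbounds _ (List.getLast_mem hvne)).2.1⟩, ?_, ?_⟩
      · show (v.getLast hvne).2 ∈ lastZero α
        have hlast : (v.getLast hvne).2 ∈ last α := marked_last hv' hvne
        rw [lastZero]
        split
        · exact Or.inl hlast
        · exact hlast
      · refine (posNFA_eval_iff w _).mpr ⟨v, hmap, marked_head_first hv', marked_chain hv',
          fun x hx => (hbounds x hx).2.2, Or.inr ⟨hvne, rfl⟩⟩
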